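/- Let α ≤ β be infinite cardinals. Every Banach space of (α, β)-universal disposition is (α, β)₁-injective. -/

import Mathlib

/-- A bundled Banach space over `ℝ`. -/
structure BanachSpace : Type (u + 1) where
  carrier : Type u
  [norm : NormedAddCommGroup carrier]
  [space : NormedSpace ℝ carrier]
  [complete : CompleteSpace carrier]

attribute [instance] BanachSpace.norm BanachSpace.space BanachSpace.complete

instance : CoeSort BanachSpace.{u} (Type u) := ⟨BanachSpace.carrier⟩

/-- A topological space has density character `< κ`: there is a dense subset of
cardinality `< κ`. -/
def DensityLT (X : Type u) [TopologicalSpace X] (κ : Cardinal.{u}) : Prop :=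
  ∃ s : Set X, Dense s ∧ Cardinal.mk s < κ

/-- `E` is `(α, β)₁`-injective: for every Banach space `B` with density character `< β` and
every closed subspace `A ⊆ B` of density character `< α`, every operator `t : A → E`
extends to `T : B → E` with `‖T‖ ≤ ‖t‖`. -/
def IsABInjective1 (α β : Cardinal.{u}) (E : BanachSpace.{u}) : Prop :=
  ∀ B : BanachSpace.{u}, DensityLT B.carrier β →
    ∀ A : Submodule ℝ B.carrier, IsClosed (A : Set B.carrier) → DensityLT A α →
      ∀ t : A →L[ℝ] E.carrier, ∃ T : B.carrier →L[ℝ] E.carrier,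
        (∀ a : A, T (a : B.carrier) = t a) ∧ ‖T‖ ≤ ‖t‖

/-- `U` is of `(α, β)`-universal disposition: given Banach spaces `A` of density character
`< α` and `B` of density character `< β` and isometric embeddings `u : A → U`, `i : A → B`,
there is an isometric embedding `u' : B → U` with `u' ∘ i = u`. -/
def IsABUnivDisp (α β : Cardinal.{u}) (U : BanachSpace.{u}) : Prop :=
  ∀ A B : BanachSpace.{u}, DensityLT A.carrier α → DensityLT B.carrier β →
    ∀ (u : A.carrier →ₗᵢ[ℝ] U.carrier) (i : A.carrier →ₗᵢ[ℝ] B.carrier),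
      ∃ u' : B.carrier →ₗᵢ[ℝ] U.carrier, ∀ a : A.carrier, u' (i a) = u a

universe u

lemma le_norm_quotient_mk {M : Type*} [NormedAddCommGroup M] [Module ℝ M] (S : Submodule ℝ M)
    (m : M) (c : ℝ) (h : ∀ x : M, x - m ∈ S → c ≤ ‖x‖) :
    c ≤ ‖(Submodule.Quotient.mk m : M ⧸ S)‖ := by
  refine le_of_forall_pos_le_add fun ε hε => ?_
  obtain ⟨x, hx, hlt⟩ := Submodule.Quotient.norm_mk_lt (Submodule.Quotient.mk m : M ⧸ S) hε
  exact (h x ((Submodule.Quotient.eq S).mp hx)).trans hlt.le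

set_option maxHeartbeats 1000000 in
lemma key (α β : Cardinal.{u}) (hα : Cardinal.aleph0 ≤ α) (hαβ : α ≤ β)
    (U : BanachSpace.{u}) (hU : IsABUnivDisp α β U)
    (B : BanachSpace.{u}) (hB : DensityLT B.carrier β)
    (A : Submodule ℝ B.carrier) (hAc : IsClosed (A : Set B.carrier)) (hA : DensityLT A α)
    (t : A →L[ℝ] U.carrier) (ht : ‖t‖ ≤ 1) :
    ∃ T : B.carrier →L[ℝ] U.carrier, (∀ a : A, T (a : B.carrier) = t a) ∧ ‖T‖ ≤ 1 := by
  haveI : CompleteSpace A := hAc.completeSpace_coe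
  -- the closure of the range of `t`
  set C : Submodule ℝ U.carrier :=
    (LinearMap.range (t : A →ₗ[ℝ] U.carrier)).topologicalClosure with hC
  haveI : CompleteSpace C :=
    (LinearMap.range (t : A →ₗ[ℝ] U.carrier)).isClosed_topologicalClosure.completeSpace_coe
  have hmemC : ∀ a : A, t a ∈ C := fun a =>
    Submodule.le_topologicalClosure _ (LinearMap.mem_range_self _ a)
  set tC : A →L[ℝ] C := t.codRestrict C hmemC with htCdef
  have htC : ∀ a : A, ‖tC a‖ ≤ ‖a‖ := by
    intro a
    have h1 : ‖tC a‖ = ‖t a‖ := rfl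
    calc ‖tC a‖ = ‖t a‖ := h1
      _ ≤ ‖t‖ * ‖a‖ := t.le_opNorm a
      _ ≤ 1 * ‖a‖ := mul_le_mul_of_nonneg_right ht (norm_nonneg a)
      _ = ‖a‖ := one_mul _
  -- the ℓ¹-sum
  set V := WithLp 1 (B.carrier × C) with hV
  have normV : ∀ x : V, ‖x‖ = ‖x.fst‖ + ‖x.snd‖ := by
    intro x
    rw [WithLp.prod_norm_eq_add (by norm_num)]
    norm_num
  set e : V ≃L[ℝ] B.carrier × C := WithLp.prodContinuousLinearEquiv 1 ℝ B.carrier C with he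
  set g : A →L[ℝ] V := e.symm.toContinuousLinearMap.comp (A.subtypeL.prod (-tC)) with hg
  have hge : ∀ a : A, e (g a) = ((a : B.carrier), -(tC a)) := by
    intro a
    simp [hg]
  have normg : ∀ a : A, ‖g a‖ = ‖a‖ + ‖tC a‖ := by
    intro a
    have : g a = e.symm ((a : B.carrier), -(tC a)) := by
      rw [← hge a]; simp
    rw [this, normV]
    have h1 : (e.symm ((a : B.carrier), -(tC a))).fst = (a : B.carrier) := rfl
    have h2 : (e.symm ((a : B.carrier), -(tC a))).snd = -(tC a) := rfl
    rw [h1, h2, norm_neg]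
    rfl
  -- the graph of `-t` is a closed subspace of `V`
  set Γ : Submodule ℝ V := LinearMap.range (g : A →ₗ[ℝ] V) with hΓ
  haveI hΓc : IsClosed (Γ : Set V) := by
    have anti : AntilipschitzWith 1 g := by
      apply AddMonoidHomClass.antilipschitz_of_bound
      intro a
      rw [normg a, NNReal.coe_one, one_mul]
      linarith [norm_nonneg (tC a)]
    have hcr : IsClosed (Set.range g) := anti.isClosed_range g.uniformContinuous
    have : (Γ : Set V) = Set.range g := by
      ext x
      simp [hΓ, LinearMap.mem_range]
    rwa [this]
  -- the pushout
  set Q := V ⧸ Γ with hQ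
  -- the map from B into Q
  have normmk : ∀ x : V, ‖(Submodule.Quotient.mk x : Q)‖ ≤ ‖x‖ := fun x =>
    Submodule.Quotient.norm_mk_le Γ x
  set jB : B.carrier →L[ℝ] Q :=
    LinearMap.mkContinuous (Γ.mkQ ∘ₗ (e.symm.toLinearMap ∘ₗ LinearMap.inl ℝ B.carrier C)) 1
      (by
        intro b
        rw [one_mul]
        refine le_trans (normmk _) (le_of_eq ?_)
        rw [normV]
        have h1 : ((e.symm ((b : B.carrier), (0 : C))).fst : B.carrier) = b := rfl
        have h2 : (e.symm ((b : B.carrier), (0 : C))).snd = (0 : C) := rfl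
        show ‖(e.symm ((b : B.carrier), (0 : C))).fst‖ + ‖(e.symm ((b : B.carrier), (0 : C))).snd‖ = _
        rw [h1, h2, norm_zero, add_zero]) with hjB
  have hga : ∀ a : A, g a = e.symm ((a : B.carrier), -(tC a)) := by
    intro a; rw [← hge a]; simp
  -- the isometric embedding of C into Q
  have jCnorm : ∀ c : C, ‖(Submodule.Quotient.mk (e.symm ((0 : B.carrier), c)) : Q)‖ = ‖c‖ := by
    intro c
    refine le_antisymm ?_ ?_
    · refine le_trans (normmk _) (le_of_eq ?_)
      rw [normV]
      have h1 : ((e.symm ((0 : B.carrier), c)).fst : B.carrier) = 0 := rfl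
      have h2 : (e.symm ((0 : B.carrier), c)).snd = c := rfl
      show ‖(e.symm ((0 : B.carrier), c)).fst‖ + ‖(e.symm ((0 : B.carrier), c)).snd‖ = _
      rw [h1, h2, norm_zero, zero_add]
    · apply le_norm_quotient_mk
      intro x hx
      obtain ⟨a, ha⟩ := hx
      have hxe : x = e.symm ((a : B.carrier), c - tC a) := by
        have ha' : g a = x - e.symm ((0 : B.carrier), c) := ha
        have : x = g a + e.symm ((0 : B.carrier), c) := by
          rw [ha']; abel
        rw [this, hga a, ← map_add]
        congr 1
        rw [Prod.mk_add_mk, add_zero, neg_add_eq_sub]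
      have h1 : ((e.symm ((a : B.carrier), c - tC a)).fst : B.carrier) = (a : B.carrier) := rfl
      have h2 : (e.symm ((a : B.carrier), c - tC a)).snd = c - tC a := rfl
      rw [hxe, normV, h1, h2]
      have h3 : ‖(a : B.carrier)‖ = ‖a‖ := rfl
      have h4 : ‖c‖ - ‖tC a‖ ≤ ‖c - tC a‖ := norm_sub_norm_le c (tC a)
      rw [h3]
      linarith [htC a]
  set jC : C →ₗᵢ[ℝ] Q :=
    { toLinearMap := Γ.mkQ ∘ₗ (e.symm.toLinearMap ∘ₗ LinearMap.inr ℝ B.carrier C)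
      norm_map' := by
        intro c
        exact jCnorm c } with hjC
  have hjCapp : ∀ c : C, jC c = Submodule.Quotient.mk (e.symm ((0 : B.carrier), c)) := by
    intro c; rfl
  -- jB extends jC ∘ tC on A
  have hext : ∀ a : A, jB (a : B.carrier) = jC (tC a) := by
    intro a
    have h1 : jB (a : B.carrier) =
        (Submodule.Quotient.mk (e.symm ((a : B.carrier), (0 : C))) : Q) := rfl
    rw [h1, hjCapp]
    rw [Submodule.Quotient.eq]
    rw [← map_sub]
    have : ((a : B.carrier), (0 : C)) - ((0 : B.carrier), tC a)
        = ((a : B.carrier), -(tC a)) := by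
      rw [Prod.mk_sub_mk, sub_zero, zero_sub]
    rw [this, ← hga a]
    exact ⟨a, rfl⟩
  -- density of C
  have hCd : DensityLT C α := by
    obtain ⟨sA, hsAd, hsAc⟩ := hA
    refine ⟨tC '' sA, ?_, lt_of_le_of_lt (Cardinal.mk_image_le) hsAc⟩
    intro x
    rw [closure_subtype]
    have himg : (Subtype.val '' (tC '' sA) : Set U.carrier) = ⇑t '' sA := by
      rw [Set.image_image]
      rfl
    rw [himg]
    have hx : (x : U.carrier) ∈ closure (Set.range ⇑t : Set U.carrier) := by
      have h2 : (x : U.carrier) ∈ (LinearMap.range (t : A →ₗ[ℝ] U.carrier)).topologicalClosure :=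
        x.2
      have h3 : ((LinearMap.range (t : A →ₗ[ℝ] U.carrier)).topologicalClosure : Set U.carrier)
          = closure (LinearMap.range (t : A →ₗ[ℝ] U.carrier) : Set U.carrier) :=
        Submodule.topologicalClosure_coe _
      have h4 : ((LinearMap.range (t : A →ₗ[ℝ] U.carrier)) : Set U.carrier)
          = Set.range ⇑t := by
        ext y
        simp [LinearMap.mem_range]
      rw [← h4, ← h3]
      exact h2
    refine closure_minimal ?_ isClosed_closure hx
    rintro _ ⟨a, rfl⟩
    have h5 : ⇑t a ∈ ⇑t '' closure sA := ⟨a, hsAd a, rfl⟩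
    exact image_closure_subset_closure_image t.continuous h5
  -- density of Q
  have hQd : DensityLT Q β := by
    obtain ⟨sB, hsBd, hsBc⟩ := hB
    obtain ⟨sC, hsCd, hsCc⟩ := hCd
    set f : B.carrier × C → Q := fun y => Submodule.Quotient.mk (e.symm y) with hf
    have hmk : Continuous (fun v : V => (Submodule.Quotient.mk v : Q)) := by
      have : LipschitzWith 1 (fun v : V => (Submodule.Quotient.mk v : Q)) := by
        apply LipschitzWith.of_dist_le_mul
        intro x y
        rw [NNReal.coe_one, one_mul, dist_eq_norm, dist_eq_norm]
        have h1 : (Submodule.Quotient.mk x : Q) - Submodule.Quotient.mk y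
            = Submodule.Quotient.mk (x - y) := by
          rw [← Submodule.mkQ_apply, ← Submodule.mkQ_apply, ← map_sub, Submodule.mkQ_apply]
        rw [h1]
        exact normmk _
      exact this.continuous
    have hfc : Continuous f := hmk.comp e.symm.continuous
    have hfs : Function.Surjective f := by
      intro q
      obtain ⟨v, rfl⟩ := Submodule.Quotient.mk_surjective Γ q
      exact ⟨e v, by simp [hf]⟩
    have hD : Dense (f '' (sB ×ˢ sC)) :=
      hfs.denseRange.dense_image hfc (hsBd.prod hsCd)
    have hcard : Cardinal.mk (sB ×ˢ sC : Set (B.carrier × C)) < β := by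
      rw [Cardinal.mk_congr (Equiv.Set.prod sB sC), Cardinal.mk_prod, Cardinal.lift_id,
        Cardinal.lift_id]
      exact Cardinal.mul_lt_of_lt (hα.trans hαβ) hsBc (hsCc.trans_le hαβ)
    exact ⟨f '' (sB ×ˢ sC), hD, lt_of_le_of_lt Cardinal.mk_image_le hcard⟩
  -- apply universal disposition
  obtain ⟨w, hw⟩ := hU ⟨C⟩ ⟨Q⟩ hCd hQd C.subtypeₗᵢ jC
  refine ⟨w.toContinuousLinearMap.comp jB, ?_, ?_⟩
  · intro a
    have h1 : w.toContinuousLinearMap (jB (a : B.carrier)) = w (jB (a : B.carrier)) := rfl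
    rw [ContinuousLinearMap.comp_apply, h1, hext a, hw (tC a)]
    rfl
  · have hjBn : ‖jB‖ ≤ 1 := LinearMap.mkContinuous_norm_le _ zero_le_one _
    apply ContinuousLinearMap.opNorm_le_bound _ zero_le_one
    intro b
    rw [ContinuousLinearMap.comp_apply]
    have h1 : ‖w.toContinuousLinearMap (jB b)‖ = ‖jB b‖ := w.norm_map _
    rw [h1]
    calc ‖jB b‖ ≤ ‖jB‖ * ‖b‖ := jB.le_opNorm b
      _ ≤ 1 * ‖b‖ := mul_le_mul_of_nonneg_right hjBn (norm_nonneg b)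


set_option maxHeartbeats 1000000 in
set_option synthInstance.maxHeartbeats 400000 in
/-- For infinite cardinals `α ≤ β`, every Banach space of `(α, β)`-universal disposition is
`(α, β)₁`-injective. -/
theorem abUnivDisp_isABInjective1
    (α β : Cardinal.{u}) (hα : Cardinal.aleph0 ≤ α) (hαβ : α ≤ β)
    (U : BanachSpace.{u}) (hU : IsABUnivDisp α β U) :
    IsABInjective1 α β U := by
  intro B hB A hAc hA t
  by_cases h0 : ‖t‖ = 0
  · have ht0 : t = 0 := (ContinuousLinearMap.opNorm_zero_iff t).mp h0
    refine ⟨0, ?_, ?_⟩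
    · intro a; simp [ht0]
    · simp [h0]
  · have hpos : 0 < ‖t‖ := lt_of_le_of_ne (norm_nonneg t) (Ne.symm h0)
    set t1 : A →L[ℝ] U.carrier := ‖t‖⁻¹ • t with ht1
    have ht1n : ‖t1‖ ≤ 1 := by
      rw [ht1]
      refine le_trans (ContinuousLinearMap.opNorm_smul_le (‖t‖⁻¹) t) (le_of_eq ?_)
      rw [norm_inv, Real.norm_of_nonneg (norm_nonneg t), inv_mul_cancel₀ h0]
    obtain ⟨T1, hT1e, hT1n⟩ := key α β hα hαβ U hU B hB A hAc hA t1 ht1n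
    refine ⟨‖t‖ • T1, ?_, ?_⟩
    · intro a
      have h1 : (‖t‖ • T1) (a : B.carrier) = ‖t‖ • T1 (a : B.carrier) := rfl
      rw [h1, hT1e a, ht1]
      have h2 : (‖t‖⁻¹ • t) a = ‖t‖⁻¹ • t a := rfl
      rw [h2, smul_smul, mul_inv_cancel₀ h0, one_smul]
    · refine le_trans (ContinuousLinearMap.opNorm_smul_le (‖t‖) T1) ?_
      rw [Real.norm_of_nonneg (norm_nonneg t)]
      calc ‖t‖ * ‖T1‖ ≤ ‖t‖ * 1 := mul_le_mul_of_nonneg_left hT1n (norm_nonneg t)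
        _ = ‖t‖ := mul_one _
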